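/- Let A and B be C*-algebras and let (p_λ)_{λ∈Λ} be a net, indexed by a directed set Λ, of positive linear maps from B to M(A) (positive meaning p_λ maps B⁺ into the positive cone of M(A)), which is increasing in the sense that λ ≤ μ implies p_μ(b) − p_λ(b) ≥ 0 for every b ∈ B⁺. If b ∈ B⁺ is such that the net (p_λ(b)) converges strictly to some element of M(A), then for every b₀ ∈ B with 0 ≤ b₀ ≤ b, the net (p_λ(b₀)) also converges strictly to some element of M(A). (In other words, the cone of elements of B⁺ for which the net converges strictly is hereditary.) -/

import Mathlib

open Filter Topology
open scoped MultiplierAlgebra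

section Aux

variable {A : Type*} [NonUnitalCStarAlgebra A]

local notation "ι" => DoubleCentralizer.coe ℂ

lemma aux_eq_zero_of_forall_mul_right {z : A} (h : ∀ x : A, x * z = 0) : z = 0 := by
  have h2 : ‖z‖ * ‖z‖ = 0 := by
    rw [← CStarRing.norm_star_mul_self (x := z), h (star z), norm_zero]
  simpa using mul_self_eq_zero.mp h2

lemma aux_eq_zero_of_forall_mul_left {z : A} (h : ∀ x : A, z * x = 0) : z = 0 := by
  have h2 : ‖z‖ * ‖z‖ = 0 := by
    rw [← CStarRing.norm_self_mul_star (x := z), h (star z), norm_zero]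
  simpa using mul_self_eq_zero.mp h2

lemma aux_fst_mul (m : 𝓜(ℂ, A)) (a c : A) : m.fst (a * c) = m.fst a * c := by
  have key : ∀ x : A, x * (m.fst (a * c) - m.fst a * c) = 0 := by
    intro x
    rw [mul_sub, ← m.central, ← mul_assoc, m.central, mul_assoc, sub_self]
  have := aux_eq_zero_of_forall_mul_right key
  linear_combination (norm := noncomm_ring) this

lemma aux_snd_mul (m : 𝓜(ℂ, A)) (a c : A) : m.snd (a * c) = a * m.snd c := by
  have key : ∀ x : A, (m.snd (a * c) - a * m.snd c) * x = 0 := by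
    intro x
    rw [sub_mul, m.central, mul_assoc, mul_assoc, ← m.central, sub_self]
  have := aux_eq_zero_of_forall_mul_left key
  linear_combination (norm := noncomm_ring) this

lemma aux_ext' (x y : 𝓜(ℂ, A)) (h1 : ∀ c, x.fst c = y.fst c) (h2 : ∀ c, x.snd c = y.snd c) :
    x = y := by
  refine DoubleCentralizer.ext _ _ _ _ (Prod.ext ?_ ?_)
  · exact ContinuousLinearMap.ext h1
  · exact ContinuousLinearMap.ext h2

lemma aux_mul_coe (m : 𝓜(ℂ, A)) (a : A) : m * ι a = ι (m.fst a) := by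
  refine aux_ext' _ _ (fun c => ?_) (fun c => ?_)
  · show m.fst ((ι a).fst c) = (ι (m.fst a)).fst c
    simpa using aux_fst_mul m a c
  · show (ι a).snd (m.snd c) = (ι (m.fst a)).snd c
    simpa using m.central c a

lemma aux_coe_mul (a : A) (m : 𝓜(ℂ, A)) : ι a * m = ι (m.snd a) := by
  refine aux_ext' _ _ (fun c => ?_) (fun c => ?_)
  · show (ι a).fst (m.fst c) = (ι (m.snd a)).fst c
    simpa using (m.central a c).symm
  · show m.snd ((ι a).snd c) = (ι (m.snd a)).snd c
    simpa using aux_snd_mul m c a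

lemma aux_norm_coe (a : A) : ‖(ι a : 𝓜(ℂ, A))‖ = ‖a‖ := by
  rw [← DoubleCentralizer.norm_fst, DoubleCentralizer.coe_fst]
  exact ContinuousLinearMap.opNorm_mul_apply ℂ A a

lemma aux_coe_star (a : A) : (ι (star a) : 𝓜(ℂ, A)) = star (ι a) :=
  (map_star (DoubleCentralizer.coeHom (𝕜 := ℂ) (A := A)) a)

lemma aux_coe_mul_coe (a c : A) : (ι (a * c) : 𝓜(ℂ, A)) = ι a * ι c :=
  map_mul (DoubleCentralizer.coeHom (𝕜 := ℂ) (A := A)) a c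

lemma aux_coe_isometry : Isometry (ι : A → 𝓜(ℂ, A)) :=
  AddMonoidHomClass.isometry_of_norm (DoubleCentralizer.coeHom (𝕜 := ℂ) (A := A)) aux_norm_coe

lemma aux_coe_eq_zero (a : A) (h : (ι a : 𝓜(ℂ, A)) = 0) : a = 0 := by
  have h0 : (ι (0 : A) : 𝓜(ℂ, A)) = 0 := map_zero (DoubleCentralizer.coeHom (𝕜 := ℂ) (A := A))
  exact aux_coe_isometry.injective (h.trans h0.symm)

end Aux

section AuxOrder
set_option synthInstance.maxHeartbeats 1000000
set_option maxHeartbeats 1000000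

variable {A : Type*} [NonUnitalCStarAlgebra A]
  [PartialOrder 𝓜(ℂ, A)] [StarOrderedRing 𝓜(ℂ, A)]

local notation "ι" => DoubleCentralizer.coe ℂ

lemma aux_cube_eq_zero {t : 𝓜(ℂ, A)} (ht : 0 ≤ t) (h3 : t ^ 3 = 0) : t = 0 := by
  have hsa : IsSelfAdjoint t := .of_nonneg ht
  have h4 : t ^ 4 = 0 := by
    rw [pow_succ, h3, zero_mul]
  have h2 : t ^ 2 = 0 := by
    have hn : ‖t ^ 2‖ * ‖t ^ 2‖ = 0 := by
      rw [← CStarRing.norm_star_mul_self (x := t ^ 2), (hsa.pow 2).star_eq]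
      rw [← pow_add, h4, norm_zero]
    simpa using mul_self_eq_zero.mp hn
  have hn : ‖t‖ * ‖t‖ = 0 := by
    rw [← CStarRing.norm_star_mul_self (x := t), hsa.star_eq]
    rw [← pow_two, h2, norm_zero]
  simpa using mul_self_eq_zero.mp hn

lemma aux_sq_le (q : 𝓜(ℂ, A)) (hq : 0 ≤ q) : q ^ 2 ≤ ‖q‖ • q := by
  set s := CFC.sqrt q with hs_def
  have hs : 0 ≤ s := CFC.sqrt_nonneg _
  have hss : s * s = q := CFC.sqrt_mul_sqrt_self q hq
  have hsa : IsSelfAdjoint s := .of_nonneg hs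
  have h1 : star s * q * s ≤ ‖q‖ • (star s * s) :=
    CStarAlgebra.star_left_conjugate_le_norm_smul (a := s) (b := q) (.of_nonneg hq)
  rw [hsa.star_eq, hss] at h1
  have h2 : s * q * s = q ^ 2 := by
    rw [← hss, pow_two]
    rw [mul_assoc, mul_assoc, mul_assoc]
  rwa [h2] at h1

lemma aux_smul_nonneg (r : ℝ) (hr : 0 ≤ r) {z : 𝓜(ℂ, A)} (hz : 0 ≤ z) :
    0 ≤ r • z := by
  set c := algebraMap ℝ 𝓜(ℂ, A) (Real.sqrt r) with hc_def
  have hcsa : IsSelfAdjoint c := IsSelfAdjoint.algebraMap _ (IsSelfAdjoint.all _)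
  have h1 : 0 ≤ star c * z * c := star_left_conjugate_nonneg hz c
  have h2 : star c * z * c = r • z := by
    rw [hcsa.star_eq]
    rw [mul_assoc, ← Algebra.commutes, ← mul_assoc, ← map_mul,
      Real.mul_self_sqrt hr, Algebra.algebraMap_eq_smul_one, smul_mul_assoc, one_mul]
  rwa [h2] at h1

lemma aux_smul_le (r : ℝ) (hr : 0 ≤ r) {w v : 𝓜(ℂ, A)} (h : w ≤ v) :
    r • w ≤ r • v := by
  rw [← sub_nonneg, ← smul_sub]
  exact aux_smul_nonneg r hr (sub_nonneg.mpr h)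

lemma aux_nonneg_of_conj (y : 𝓜(ℂ, A)) (hy : IsSelfAdjoint y)
    (h : ∀ a : A, 0 ≤ star (ι a : 𝓜(ℂ, A)) * y * (ι a)) : 0 ≤ y := by
  have hn0 : 0 ≤ y⁻ := CFC.negPart_nonneg y
  have hn3 : 0 ≤ y⁻ ^ 3 := CStarAlgebra.pow_nonneg hn0 3
  have hnsa : IsSelfAdjoint (y⁻) := .of_nonneg hn0
  have hpn : y⁻ * y⁺ = 0 := CFC.negPart_mul_posPart y
  have hsub : y⁺ - y⁻ = y := CFC.posPart_sub_negPart y hy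
  have hnyn : y⁻ * y * y⁻ = -(y⁻ ^ 3) := by
    calc y⁻ * y * y⁻ = y⁻ * (y⁺ - y⁻) * y⁻ := by rw [hsub]
      _ = (y⁻ * y⁺) * y⁻ - y⁻ * y⁻ * y⁻ := by noncomm_ring
      _ = -(y⁻ ^ 3) := by
          rw [hpn, zero_mul, zero_sub, pow_succ, pow_two]
  have key : ∀ c : A, star (ι c : 𝓜(ℂ, A)) * (y⁻ ^ 3) * (ι c) = 0 := by
    intro c
    have h1 := h ((y⁻).fst c)
    rw [← aux_mul_coe (y⁻) c] at h1
    have h3 : star ((y⁻ : 𝓜(ℂ, A)) * ι c) * y * (y⁻ * ι c)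
        = star (ι c : 𝓜(ℂ, A)) * (y⁻ * y * y⁻) * ι c := by
      rw [star_mul, hnsa.star_eq]
      noncomm_ring
    rw [h3, hnyn] at h1
    have h4 : (0 : 𝓜(ℂ, A)) ≤ star (ι c : 𝓜(ℂ, A)) * (y⁻ ^ 3) * ι c :=
      star_left_conjugate_nonneg hn3 _
    have h5 : star (ι c : 𝓜(ℂ, A)) * -(y⁻ ^ 3) * ι c
        = -(star (ι c : 𝓜(ℂ, A)) * (y⁻ ^ 3) * ι c) := by noncomm_ring
    rw [h5] at h1
    exact le_antisymm (neg_nonneg.mp h1) h4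
  set r := CFC.sqrt (y⁻ ^ 3) with hr_def
  have hr0 : 0 ≤ r := CFC.sqrt_nonneg _
  have hrr : r * r = y⁻ ^ 3 := CFC.sqrt_mul_sqrt_self _ hn3
  have hrsa : IsSelfAdjoint r := .of_nonneg hr0
  have hrc : ∀ c : A, r.fst c = 0 := by
    intro c
    have h6 : star ((r : 𝓜(ℂ, A)) * ι c) * (r * ι c)
        = star (ι c : 𝓜(ℂ, A)) * (y⁻ ^ 3) * ι c := by
      rw [star_mul, hrsa.star_eq, ← hrr]
      noncomm_ring
    have h7 : star ((r : 𝓜(ℂ, A)) * ι c) * (r * ι c) = 0 := by rw [h6, key c]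
    have h8 : (r : 𝓜(ℂ, A)) * ι c = 0 := by
      have : ‖(r : 𝓜(ℂ, A)) * ι c‖ * ‖(r : 𝓜(ℂ, A)) * ι c‖ = 0 := by
        rw [← CStarRing.norm_star_mul_self, h7, norm_zero]
      simpa using mul_self_eq_zero.mp this
    rw [aux_mul_coe r c] at h8
    exact aux_coe_eq_zero _ h8
  have hr_eq : r = 0 := by
    refine aux_ext' _ _ (fun c => by simpa using hrc c) (fun c => ?_)
    have : r.snd c = star (r.fst (star c)) := by
      conv_lhs => rw [← hrsa.star_eq]
      rw [DoubleCentralizer.star_snd]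
    simp [this, hrc]
  have hn_eq : y⁻ = 0 := by
    refine aux_cube_eq_zero hn0 ?_
    rw [← hrr, hr_eq, mul_zero]
  rw [← hsub, hn_eq, sub_zero]
  exact CFC.posPart_nonneg y

end AuxOrder

set_option maxHeartbeats 2000000
set_option synthInstance.maxHeartbeats 1000000

/-- **Key Lemma.** Let `(p_λ)` be an increasing net of positive linear maps from a
C*-algebra `B` into the multiplier algebra `M(A)` of a C*-algebra `A`.  If `b ∈ B⁺` is such
that the net `(p_λ(b))` converges strictly to some element of `M(A)`, then for every
`b₀` with `0 ≤ b₀ ≤ b`, the net `(p_λ(b₀))` also converges strictly to some element of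
`M(A)`: the cone of elements where the net converges strictly is hereditary. -/
theorem stmt3
    {A B : Type*} [NonUnitalCStarAlgebra A] [NonUnitalCStarAlgebra B]
    [PartialOrder B] [StarOrderedRing B]
    [PartialOrder 𝓜(ℂ, A)] [StarOrderedRing 𝓜(ℂ, A)]
    {Λ : Type*} [Preorder Λ] [Nonempty Λ] [IsDirected Λ (· ≤ ·)]
    (p : Λ → B →ₗ[ℂ] 𝓜(ℂ, A))
    (hpos : ∀ (l : Λ) (b : B), 0 ≤ b → 0 ≤ p l b)
    (hmono : ∀ (l l' : Λ), l ≤ l' → ∀ b : B, 0 ≤ b → 0 ≤ p l' b - p l b)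
    (b : B) (hb : 0 ≤ b)
    (m : 𝓜(ℂ, A))
    (hconv : ∀ a : A,
      Tendsto (fun l => (p l b).fst a) atTop (𝓝 (m.fst a)) ∧
      Tendsto (fun l => (p l b).snd a) atTop (𝓝 (m.snd a)))
    (b₀ : B) (hb₀ : 0 ≤ b₀) (hb₀b : b₀ ≤ b) :
    ∃ m₀ : 𝓜(ℂ, A), ∀ a : A,
      Tendsto (fun l => (p l b₀).fst a) atTop (𝓝 (m₀.fst a)) ∧
      Tendsto (fun l => (p l b₀).snd a) atTop (𝓝 (m₀.snd a)) := by
  classical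
  -- basic positivity facts
  have hb₀' : ∀ l, 0 ≤ p l b₀ := fun l => hpos l b₀ hb₀
  have hdiff : ∀ l, 0 ≤ p l b - p l b₀ := fun l => by
    have h := hpos l (b - b₀) (by rwa [sub_nonneg])
    rwa [map_sub] at h
  have hsa_b : ∀ l, IsSelfAdjoint (p l b) := fun l => .of_nonneg (hpos l b hb)
  have hsa_b₀ : ∀ l, IsSelfAdjoint (p l b₀) := fun l => .of_nonneg (hb₀' l)
  -- m is selfadjoint
  have hm_sa : IsSelfAdjoint m := by
    refine aux_ext' _ _ (fun c => ?_) (fun c => ?_)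
    · have t1 : Tendsto (fun l => star ((p l b).snd (star c))) atTop
          (𝓝 (star (m.snd (star c)))) := ((hconv (star c)).2).star
      have t2 : Tendsto (fun l => star ((p l b).snd (star c))) atTop (𝓝 (m.fst c)) := by
        have he : (fun l => star ((p l b).snd (star c))) = fun l => (p l b).fst c := by
          funext l
          rw [← DoubleCentralizer.star_fst, (hsa_b l).star_eq]
        rw [he]; exact (hconv c).1
      rw [DoubleCentralizer.star_fst]
      exact tendsto_nhds_unique t1 t2
    · have t1 : Tendsto (fun l => star ((p l b).fst (star c))) atTop
          (𝓝 (star (m.fst (star c)))) := ((hconv (star c)).1).star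
      have t2 : Tendsto (fun l => star ((p l b).fst (star c))) atTop (𝓝 (m.snd c)) := by
        have he : (fun l => star ((p l b).fst (star c))) = fun l => (p l b).snd c := by
          funext l
          rw [← DoubleCentralizer.star_snd, (hsa_b l).star_eq]
        rw [he]; exact (hconv c).2
      rw [DoubleCentralizer.star_snd]
      exact tendsto_nhds_unique t1 t2
  -- p l b ≤ m for every l
  have hle : ∀ l, p l b ≤ m := by
    intro l
    rw [← sub_nonneg]
    refine aux_nonneg_of_conj _ (hm_sa.sub (hsa_b l)) (fun a => ?_)
    have econj : ∀ z : 𝓜(ℂ, A),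
        star (DoubleCentralizer.coe ℂ a : 𝓜(ℂ, A)) * z * DoubleCentralizer.coe ℂ a
          = DoubleCentralizer.coe ℂ (star a * z.fst a) := fun z => by
      rw [← aux_coe_star, mul_assoc, aux_mul_coe z a, ← aux_coe_mul_coe]
    rw [econj]
    have t3 : Tendsto (fun u => star a * ((p u b).fst a - (p l b).fst a)) atTop
        (𝓝 (star a * (m.fst a - (p l b).fst a))) :=
      (((hconv a).1).sub tendsto_const_nhds).const_mul (star a)
    have t4 : Tendsto (fun u => DoubleCentralizer.coe ℂ
          (star a * ((p u b).fst a - (p l b).fst a)) : Λ → 𝓜(ℂ, A)) atTop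
        (𝓝 (DoubleCentralizer.coe ℂ (star a * (m.fst a - (p l b).fst a)))) :=
      (aux_coe_isometry.continuous.tendsto _).comp t3
    have hmem : ∀ᶠ u in atTop, (0 : 𝓜(ℂ, A)) ≤ DoubleCentralizer.coe ℂ
        (star a * ((p u b).fst a - (p l b).fst a)) := by
      filter_upwards [eventually_ge_atTop l] with u hu
      have h9 := star_left_conjugate_nonneg (hmono l u hu b hb) (DoubleCentralizer.coe ℂ a)
      rw [econj (p u b - p l b)] at h9
      simpa [DoubleCentralizer.sub_fst] using h9
    have hclosed : IsClosed {z : 𝓜(ℂ, A) | 0 ≤ z} := CStarAlgebra.isClosed_nonneg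
    have := hclosed.mem_of_tendsto t4 hmem
    simpa [DoubleCentralizer.sub_fst] using this
  -- norm bounds
  have hnorm_b₀ : ∀ l, ‖p l b₀‖ ≤ ‖m‖ := fun l =>
    CStarAlgebra.norm_le_norm_of_nonneg_of_le (hb₀' l)
      ((sub_nonneg.mp (hdiff l)).trans (hle l))
  -- the key Cauchy estimate
  have key : ∀ a : A, ∀ ε : ℝ, 0 < ε → ∃ l₀ : Λ, ∀ l, l₀ ≤ l → ∀ u, l ≤ u →
      ‖(p u b₀).fst a - (p l b₀).fst a‖ < ε := by
    intro a ε hε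
    set C : ℝ := 2 * ‖m‖ + 1 with hC_def
    have hC0 : 0 < C := by positivity
    set δ : ℝ := ε ^ 2 / (2 * C * (‖a‖ + 1)) with hδ_def
    have hδ0 : 0 < δ := by positivity
    have hev : ∀ᶠ l in atTop, ‖(p l b).fst a - m.fst a‖ < δ := by
      have t5 : Tendsto (fun l => ‖(p l b).fst a - m.fst a‖) atTop (𝓝 0) := by
        have tc : Tendsto (fun _ : Λ => m.fst a) atTop (𝓝 (m.fst a)) := tendsto_const_nhds
        simpa using (((hconv a).1).sub tc).norm
      exact t5.eventually (gt_mem_nhds hδ0)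
    obtain ⟨l₀, hl₀⟩ := eventually_atTop.mp hev
    refine ⟨l₀, fun l hl u hu => ?_⟩
    set q : 𝓜(ℂ, A) := p u b₀ - p l b₀ with hq_def
    set Q : 𝓜(ℂ, A) := p u b - p l b with hQ_def
    have hq0 : 0 ≤ q := hmono l u hu b₀ hb₀
    have hQ0 : 0 ≤ Q := hmono l u hu b hb
    have hqQ : q ≤ Q := by
      rw [← sub_nonneg]
      have h := hmono l u hu (b - b₀) (sub_nonneg.mpr hb₀b)
      rw [map_sub, map_sub] at h
      have e : p u (b) - p u b₀ - (p l b - p l b₀) = Q - q := by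
        rw [hq_def, hQ_def]; abel
      rwa [e] at h
    have hq_sa : IsSelfAdjoint q := .of_nonneg hq0
    -- pass to the multiplier algebra
    set x : 𝓜(ℂ, A) := DoubleCentralizer.coe ℂ a with hx_def
    have e1 : ‖(p u b₀).fst a - (p l b₀).fst a‖ = ‖q * x‖ := by
      rw [hx_def, aux_mul_coe q a, aux_norm_coe]
      simp [hq_def, DoubleCentralizer.sub_fst]
    have e2 : star (q * x) * (q * x) = star x * q ^ 2 * x := by
      rw [star_mul, hq_sa.star_eq, pow_two]
      noncomm_ring
    have hq2Q : q ^ 2 ≤ ‖q‖ • Q :=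
      (aux_sq_le q hq0).trans (aux_smul_le ‖q‖ (norm_nonneg q) hqQ)
    have h_le1 : star x * q ^ 2 * x ≤ ‖q‖ • (star x * Q * x) := by
      calc star x * q ^ 2 * x ≤ star x * (‖q‖ • Q) * x := star_left_conjugate_le_conjugate hq2Q x
        _ = ‖q‖ • (star x * Q * x) := by rw [mul_smul_comm, smul_mul_assoc]
    have hnorm1 : ‖q * x‖ * ‖q * x‖ ≤ ‖q‖ * ‖star x * Q * x‖ := by
      rw [← CStarRing.norm_star_mul_self (x := q * x), e2]
      calc ‖star x * q ^ 2 * x‖ ≤ ‖‖q‖ • (star x * Q * x)‖ :=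
            CStarAlgebra.norm_le_norm_of_nonneg_of_le
              (by rw [← e2]; exact star_mul_self_nonneg _) h_le1
        _ = ‖q‖ * ‖star x * Q * x‖ := by
            rw [norm_smul, Real.norm_of_nonneg (norm_nonneg q)]
    -- bound the two factors
    have hqC : ‖q‖ ≤ 2 * ‖m‖ := by
      calc ‖q‖ ≤ ‖p u b₀‖ + ‖p l b₀‖ := norm_sub_le _ _
        _ ≤ ‖m‖ + ‖m‖ := add_le_add (hnorm_b₀ u) (hnorm_b₀ l)
        _ = 2 * ‖m‖ := by ring
    have hv : ‖star x * Q * x‖ ≤ ‖a‖ * (δ + δ) := by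
      have econj : star x * Q * x = DoubleCentralizer.coe ℂ (star a * Q.fst a) := by
        rw [hx_def, ← aux_coe_star, mul_assoc, aux_mul_coe Q a, ← aux_coe_mul_coe]
      rw [econj, aux_norm_coe]
      have h10 : ‖Q.fst a‖ ≤ δ + δ := by
        have hQa : Q.fst a = ((p u b).fst a - m.fst a) - ((p l b).fst a - m.fst a) := by
          simp [hQ_def, DoubleCentralizer.sub_fst]
        rw [hQa]
        calc ‖((p u b).fst a - m.fst a) - ((p l b).fst a - m.fst a)‖
            ≤ ‖(p u b).fst a - m.fst a‖ + ‖(p l b).fst a - m.fst a‖ := norm_sub_le _ _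
          _ ≤ δ + δ := add_le_add (hl₀ u (hl.trans hu)).le (hl₀ l hl).le
      calc ‖star a * Q.fst a‖ ≤ ‖star a‖ * ‖Q.fst a‖ := norm_mul_le _ _
        _ = ‖a‖ * ‖Q.fst a‖ := by rw [norm_star]
        _ ≤ ‖a‖ * (δ + δ) := by
            exact mul_le_mul_of_nonneg_left h10 (norm_nonneg a)
    -- combine
    have hfinal : ‖q * x‖ * ‖q * x‖ < ε * ε := by
      have h11 : ‖q‖ * ‖star x * Q * x‖ ≤ (2 * ‖m‖) * (‖a‖ * (δ + δ)) :=
        mul_le_mul hqC hv (norm_nonneg _) (by positivity)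
      have h12 : δ * (2 * C * (‖a‖ + 1)) = ε ^ 2 := by
        rw [hδ_def]; field_simp
      have hm0 : (0 : ℝ) ≤ ‖m‖ := norm_nonneg m
      have ha0 : (0 : ℝ) ≤ ‖a‖ := norm_nonneg a
      nlinarith [hnorm1, mul_pos hδ0 hC0, mul_pos hδ0 (mul_pos hδ0 hC0)]
    rw [e1]
    nlinarith [norm_nonneg (q * x), hε]
  -- existence of the limit of `(p l b₀).fst a` for each `a`
  have hF : ∀ a : A, ∃ z : A, Tendsto (fun l => (p l b₀).fst a) atTop (𝓝 z) := by
    intro a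
    have hc : Cauchy (Filter.map (fun l => (p l b₀).fst a) atTop) := by
      rw [cauchy_map_iff]
      refine ⟨atTop_neBot, ?_⟩
      rw [Metric.uniformity_basis_dist.tendsto_right_iff]
      intro ε hε
      rw [prod_atTop_atTop_eq, eventually_atTop_prod_self']
      obtain ⟨l₀, h⟩ := key a (ε / 2) (half_pos hε)
      refine ⟨l₀, fun k hk l hl => ?_⟩
      obtain ⟨u, hku, hlu⟩ := directed_of (· ≤ ·) k l
      have h1 := h k hk u hku
      have h2 := h l hl u hlu
      show dist ((p k b₀).fst a) ((p l b₀).fst a) < ε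
      rw [dist_eq_norm]
      have e3 : (p k b₀).fst a - (p l b₀).fst a
          = ((p u b₀).fst a - (p l b₀).fst a) - ((p u b₀).fst a - (p k b₀).fst a) := by abel
      rw [e3]
      calc ‖((p u b₀).fst a - (p l b₀).fst a) - ((p u b₀).fst a - (p k b₀).fst a)‖
          ≤ ‖(p u b₀).fst a - (p l b₀).fst a‖ + ‖(p u b₀).fst a - (p k b₀).fst a‖ :=
            norm_sub_le _ _
        _ < ε / 2 + ε / 2 := add_lt_add h2 h1
        _ = ε := add_halves ε
    exact CompleteSpace.complete hc
  -- define the limit function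
  set f : A → A := fun a => (hF a).choose with hf_def
  have hf : ∀ a : A, Tendsto (fun l => (p l b₀).fst a) atTop (𝓝 (f a)) :=
    fun a => (hF a).choose_spec
  have hg : ∀ a : A, Tendsto (fun l => (p l b₀).snd a) atTop (𝓝 (star (f (star a)))) := by
    intro a
    have he : (fun l => (p l b₀).snd a) = fun l => star ((p l b₀).fst (star a)) := by
      funext l
      rw [← DoubleCentralizer.star_snd, (hsa_b₀ l).star_eq]
    rw [he]
    exact (hf (star a)).star
  -- bounds
  have hfb : ∀ a : A, ‖f a‖ ≤ ‖m‖ * ‖a‖ := by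
    intro a
    refine le_of_tendsto (hf a).norm (Eventually.of_forall fun l => ?_)
    calc ‖(p l b₀).fst a‖ ≤ ‖(p l b₀).fst‖ * ‖a‖ := (p l b₀).fst.le_opNorm a
      _ ≤ ‖m‖ * ‖a‖ := by
          have := (DoubleCentralizer.norm_fst (p l b₀)) ▸ hnorm_b₀ l
          exact mul_le_mul_of_nonneg_right this (norm_nonneg a)
  -- linearity of f
  have hf_add : ∀ a c : A, f (a + c) = f a + f c := by
    intro a c
    have h1 : Tendsto (fun l => (p l b₀).fst (a + c)) atTop (𝓝 (f a + f c)) := by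
      have he : (fun l => (p l b₀).fst (a + c))
          = fun l => (p l b₀).fst a + (p l b₀).fst c := by
        funext l; rw [map_add]
      rw [he]; exact (hf a).add (hf c)
    exact tendsto_nhds_unique (hf (a + c)) h1
  have hf_smul : ∀ (s : ℂ) (a : A), f (s • a) = s • f a := by
    intro s a
    have h1 : Tendsto (fun l => (p l b₀).fst (s • a)) atTop (𝓝 (s • f a)) := by
      have he : (fun l => (p l b₀).fst (s • a)) = fun l => s • ((p l b₀).fst a) := by
        funext l; rw [map_smul]
      rw [he]; exact (hf a).const_smul s
    exact tendsto_nhds_unique (hf (s • a)) h1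
  -- build the continuous linear maps
  let F₀ : A →ₗ[ℂ] A :=
    { toFun := f
      map_add' := hf_add
      map_smul' := hf_smul }
  let F : A →L[ℂ] A := F₀.mkContinuous ‖m‖ hfb
  have hg_add : ∀ a c : A, star (f (star (a + c))) = star (f (star a)) + star (f (star c)) := by
    intro a c
    have h1 : Tendsto (fun l => (p l b₀).snd (a + c))
        atTop (𝓝 (star (f (star a)) + star (f (star c)))) := by
      have he : (fun l => (p l b₀).snd (a + c))
          = fun l => (p l b₀).snd a + (p l b₀).snd c := by
        funext l; rw [map_add]
      rw [he]; exact (hg a).add (hg c)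
    exact tendsto_nhds_unique (hg (a + c)) h1
  have hg_smul : ∀ (s : ℂ) (a : A), star (f (star (s • a))) = s • star (f (star a)) := by
    intro s a
    have h1 : Tendsto (fun l => (p l b₀).snd (s • a))
        atTop (𝓝 (s • star (f (star a)))) := by
      have he : (fun l => (p l b₀).snd (s • a)) = fun l => s • ((p l b₀).snd a) := by
        funext l; rw [map_smul]
      rw [he]; exact (hg a).const_smul s
    exact tendsto_nhds_unique (hg (s • a)) h1
  have hgb : ∀ a : A, ‖star (f (star a))‖ ≤ ‖m‖ * ‖a‖ := by
    intro a
    rw [norm_star]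
    calc ‖f (star a)‖ ≤ ‖m‖ * ‖star a‖ := hfb (star a)
      _ = ‖m‖ * ‖a‖ := by rw [norm_star]
  let G₀ : A →ₗ[ℂ] A :=
    { toFun := fun a => star (f (star a))
      map_add' := hg_add
      map_smul' := hg_smul }
  let G : A →L[ℂ] A := G₀.mkContinuous ‖m‖ hgb
  have hcentral : ∀ u v : A, G u * v = u * F v := by
    intro u v
    have t1 : Tendsto (fun l => (p l b₀).snd u * v) atTop (𝓝 (star (f (star u)) * v)) :=
      (hg u).mul tendsto_const_nhds
    have t2 : Tendsto (fun l => u * (p l b₀).fst v) atTop (𝓝 (u * f v)) :=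
      tendsto_const_nhds.mul (hf v)
    have he : (fun l => (p l b₀).snd u * v) = fun l => u * (p l b₀).fst v := by
      funext l; exact (p l b₀).central u v
    rw [he] at t1
    exact tendsto_nhds_unique t1 t2
  refine ⟨⟨(F, G), hcentral⟩, fun a => ⟨hf a, hg a⟩⟩
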